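/- Completeness of DCila with respect to swap Kripke models: for every set of formulas Γ ∪ {φ} ⊆ For(Σ), if Γ ⊨_DCila φ then Γ ⊢_DCila φ. -/
import Mathlib


/-- Formulas over the signature Σ = {∧, ∨, →, ¬, ∘, O}, with countably many
propositional variables. -/
inductive Form : Type
  | var : ℕ → Form
  | and : Form → Form → Form
  | or : Form → Form → Form
  | imp : Form → Form → Form
  | neg : Form → Form
  | circ : Form → Form
  | obl : Form → Form

namespace Form
/-- ⊥_α := (α ∧ ¬α) ∧ ∘α -/
def bot (α : Form) : Form := (α.and α.neg).and α.circ
end Form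

/-- Theorems of DCila: the DmbC axioms (CPL⁺, (EM), (bc), (O-K), (O-E)) plus
(ci), (cl), (cf) and the propagation axioms (ca_#) for # ∈ {∧, ∨, →},
with Modus Ponens and O-necessitation. -/
inductive ThmDCila : Form → Prop
  | A1 (α β : Form) : ThmDCila (α.imp (β.imp α))
  | A2 (α β γ : Form) : ThmDCila ((α.imp (β.imp γ)).imp ((α.imp β).imp (α.imp γ)))
  | A3 (α β : Form) : ThmDCila (α.imp (β.imp (α.and β)))
  | A4 (α β : Form) : ThmDCila ((α.and β).imp α)
  | A5 (α β : Form) : ThmDCila ((α.and β).imp β)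
  | A6 (α β : Form) : ThmDCila (α.imp (α.or β))
  | A7 (α β : Form) : ThmDCila (β.imp (α.or β))
  | A8 (α β γ : Form) : ThmDCila ((α.imp γ).imp ((β.imp γ).imp ((α.or β).imp γ)))
  | A9 (α β : Form) : ThmDCila (((α.imp β).imp α).imp α)
  | EM (α : Form) : ThmDCila (α.or α.neg)
  | bc (α β : Form) : ThmDCila (α.circ.imp (α.imp (α.neg.imp β)))
  | ci (α : Form) : ThmDCila (α.circ.neg.imp (α.and α.neg))
  | cl (α : Form) : ThmDCila ((α.and α.neg).neg.imp α.circ)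
  | cf (α : Form) : ThmDCila (α.neg.neg.imp α)
  | caAnd (α β : Form) : ThmDCila ((α.circ.and β.circ).imp (α.and β).circ)
  | caOr (α β : Form) : ThmDCila ((α.circ.and β.circ).imp (α.or β).circ)
  | caImp (α β : Form) : ThmDCila ((α.circ.and β.circ).imp (α.imp β).circ)
  | OK (α β : Form) : ThmDCila ((α.imp β).obl.imp (α.obl.imp β.obl))
  | OE (α : Form) : ThmDCila (α.bot.obl.imp α.bot)
  | mp {α β : Form} : ThmDCila (α.imp β) → ThmDCila α → ThmDCila β
  | nec {α : Form} : ThmDCila α → ThmDCila α.obl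

/-- conj γ [γ₂,…,γ_k] = γ ∧ γ₂ ∧ … ∧ γ_k -/
def conj (γ : Form) : List Form → Form
  | [] => γ
  | δ :: l => γ.and (conj δ l)

/-- Γ ⊢_DCila φ iff ⊢ φ or ⊢ (γ₁ ∧ … ∧ γ_k) → φ for some γ₁,…,γ_k ∈ Γ, k ≥ 1. -/
def DerivDCila (Γ : Set Form) (φ : Form) : Prop :=
  ThmDCila φ ∨ ∃ (γ : Form) (l : List Form),
    (∀ δ ∈ γ :: l, δ ∈ Γ) ∧ ThmDCila ((conj γ l).imp φ)

/-- The three snapshots T = (1,0), t = (1,1), F = (0,1). -/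
inductive SV : Type
  | T | t | F
deriving DecidableEq

/-- First coordinate of a snapshot. -/
def SV.p1 : SV → Bool
  | .T => true | .t => true | .F => false

/-- Second coordinate of a snapshot. -/
def SV.p2 : SV → Bool
  | .T => false | .t => true | .F => true

/-- Designated values: D = {T, t}, i.e. first coordinate is 1. -/
def SV.desig (a : SV) : Prop := a.p1 = true

/-- The Boolean (classical) snapshots {T, F}. -/
def SV.boo (a : SV) : Prop := a = SV.T ∨ a = SV.F

/-- Swap Kripke model conditions for DCila on a serial frame (W,R):
the DCi conditions (with ¬ interpreted by ¬̃₁ and ∘ by ∘̃₂) plus the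
restrictions that v_w(α) = t implies v_w(α ∧ ¬α) = T, and that
v_w(α), v_w(β) ∈ {T,F} implies v_w(α # β) ∈ {T,F} for # ∈ {∧, ∨, →}. -/
structure IsModelDCila {W : Type} (R : W → W → Prop) (v : W → Form → SV) : Prop where
  serial : ∀ w, ∃ w', R w w'
  and_ : ∀ w α β, (v w (α.and β)).p1 = ((v w α).p1 && (v w β).p1)
  or_ : ∀ w α β, (v w (α.or β)).p1 = ((v w α).p1 || (v w β).p1)
  imp_ : ∀ w α β, (v w (α.imp β)).p1 = (!(v w α).p1 || (v w β).p1)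
  neg_ : ∀ w α, (v w α.neg).p1 = (v w α).p2 ∧ (v w α.neg).p2 ≤ (v w α).p1
  circ_ : ∀ w α, (v w α.circ).p1 = !((v w α).p1 && (v w α).p2) ∧
    (v w α.circ).p2 = ((v w α).p1 && (v w α).p2)
  obl_ : ∀ w α, ((v w α.obl).p1 = true ↔ ∀ w', R w w' → (v w' α).p1 = true)
  cl_ : ∀ w α, v w α = SV.t → v w (α.and α.neg) = SV.T
  booAnd : ∀ w α β, (v w α).boo → (v w β).boo → (v w (α.and β)).boo
  booOr : ∀ w α β, (v w α).boo → (v w β).boo → (v w (α.or β)).boo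
  booImp : ∀ w α β, (v w α).boo → (v w β).boo → (v w (α.imp β)).boo

/-- Γ ⊨_DCila φ : semantic consequence over all swap Kripke models for DCila. -/
def SemDCila (Γ : Set Form) (φ : Form) : Prop :=
  ∀ (W : Type) (R : W → W → Prop) (v : W → Form → SV), Nonempty W →
    IsModelDCila R v → ∀ w : W, (∀ γ ∈ Γ, (v w γ).desig) → (v w φ).desig

namespace DCilaProof

/-- Natural-deduction style derivability. -/
inductive DerL (Γ : Set Form) : Form → Prop
  | ax {φ} : φ ∈ Γ → DerL Γ φ
  | thm {φ} : ThmDCila φ → DerL Γ φ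
  | mp {α β} : DerL Γ (α.imp β) → DerL Γ α → DerL Γ β

theorem thm_id (α : Form) : ThmDCila (α.imp α) :=
  .mp (.mp (.A2 α (α.imp α) α) (.A1 α (α.imp α))) (.A1 α α)

theorem DerL.mono {Γ Γ' : Set Form} (h : Γ ⊆ Γ') {φ} : DerL Γ φ → DerL Γ' φ := by
  intro d; induction d with
  | ax h' => exact .ax (h h')
  | thm t => exact .thm t
  | mp _ _ ih1 ih2 => exact .mp ih1 ih2

theorem DerL.ded {Γ : Set Form} {α β} (h : DerL (insert α Γ) β) : DerL Γ (α.imp β) := by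
  induction h with
  | ax h' =>
    rcases Set.mem_insert_iff.mp h' with rfl | h'
    · exact .thm (thm_id _)
    · exact .mp (.thm (.A1 _ _)) (.ax h')
  | thm t => exact .mp (.thm (.A1 _ _)) (.thm t)
  | mp _ _ ih1 ih2 => exact .mp (.mp (.thm (.A2 _ _ _)) ih1) ih2

theorem DerL.cut {Γ Γ' : Set Form} {φ} (h : DerL Γ φ) (hs : ∀ γ ∈ Γ, DerL Γ' γ) :
    DerL Γ' φ := by
  induction h with
  | ax h' => exact hs _ h'
  | thm t => exact .thm t
  | mp _ _ ih1 ih2 => exact .mp ih1 ih2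

theorem DerL.toThm {φ} (h : DerL ∅ φ) : ThmDCila φ := by
  induction h with
  | ax h' => exact absurd h' (Set.notMem_empty _)
  | thm t => exact t
  | mp _ _ ih1 ih2 => exact ih1.mp ih2

theorem thm_comp {α β γ : Form} (h1 : ThmDCila (β.imp γ)) (h2 : ThmDCila (α.imp β)) :
    ThmDCila (α.imp γ) :=
  (DerL.ded (Γ := ∅) (.mp (.thm h1) (.mp (.thm h2) (.ax (Set.mem_insert _ _))))).toThm

/-- `impList [γ₁,…,γ_k] β = γ₁ → (γ₂ → … → β)` -/
def impList : List Form → Form → Form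
  | [], β => β
  | γ :: L, β => γ.imp (impList L β)

theorem impList_append (L M : List Form) (β : Form) :
    impList (L ++ M) β = impList L (impList M β) := by
  induction L with
  | nil => rfl
  | cons γ L ih => simp [impList, ih]

theorem DerL.impList_elim {S : Set Form} {L : List Form} {β : Form}
    (h : DerL S (impList L β)) (hL : ∀ δ ∈ L, δ ∈ S) : DerL S β := by
  induction L with
  | nil => exact h
  | cons γ L ih =>
    exact ih (DerL.mp h (.ax (hL γ (by simp)))) (fun δ hδ => hL δ (by simp [hδ]))

theorem DerL.toList {S : Set Form} {φ : Form} (h : DerL S φ) :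
    ∃ L : List Form, (∀ δ ∈ L, δ ∈ S) ∧ DerL {x | x ∈ L} φ := by
  induction h with
  | ax h' => exact ⟨[_], by simpa using h', .ax (by simp)⟩
  | thm t => exact ⟨[], by simp, .thm t⟩
  | mp _ _ ih1 ih2 =>
    obtain ⟨L₁, h₁, d₁⟩ := ih1; obtain ⟨L₂, h₂, d₂⟩ := ih2
    refine ⟨L₁ ++ L₂, ?_, .mp (d₁.mono ?_) (d₂.mono ?_)⟩
    · intro δ hδ; rcases List.mem_append.mp hδ with h | h; exacts [h₁ δ h, h₂ δ h]
    · intro x hx; simp only [Set.mem_setOf_eq] at hx ⊢; exact List.mem_append.mpr (Or.inl hx)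
    · intro x hx; simp only [Set.mem_setOf_eq] at hx ⊢; exact List.mem_append.mpr (Or.inr hx)

theorem derL_list_thm : ∀ (L : List Form) (φ : Form), DerL {x | x ∈ L} φ →
    ∃ L' : List Form, (∀ δ ∈ L', δ ∈ L) ∧ ThmDCila (impList L' φ) := by
  intro L; induction L with
  | nil =>
    intro φ h
    exact ⟨[], by simp, (h.mono (by intro x hx; simp at hx)).toThm⟩
  | cons γ M ih =>
    intro φ h
    have h' : DerL (insert γ {x | x ∈ M}) φ := by
      refine h.mono ?_
      intro x hx; simp only [Set.mem_setOf_eq, List.mem_cons] at hx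
      rcases hx with rfl | hx
      · exact Set.mem_insert _ _
      · exact Set.mem_insert_of_mem _ hx
    obtain ⟨L', hL', t⟩ := ih _ h'.ded
    refine ⟨L' ++ [γ], ?_, ?_⟩
    · intro δ hδ
      rcases List.mem_append.mp hδ with h | h
      · exact List.mem_cons_of_mem _ (hL' δ h)
      · simp at h; simp [h]
    · rw [impList_append]; exact t

theorem DerL.compact {S : Set Form} {φ : Form} (h : DerL S φ) :
    ∃ L : List Form, (∀ δ ∈ L, δ ∈ S) ∧ ThmDCila (impList L φ) := by
  obtain ⟨L, hL, d⟩ := h.toList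
  obtain ⟨L', hL', t⟩ := derL_list_thm L φ d
  exact ⟨L', fun δ hδ => hL δ (hL' δ hδ), t⟩

theorem conj_mem_derL {Γ : Set Form} :
    ∀ (l : List Form) (γ : Form), (∀ δ ∈ γ :: l, δ ∈ Γ) → DerL Γ (conj γ l) := by
  intro l; induction l with
  | nil => intro γ h; exact .ax (h γ (by simp))
  | cons δ m ih =>
    intro γ h
    exact .mp (.mp (.thm (.A3 _ _)) (.ax (h γ (by simp))))
      (ih δ (fun x hx => h x (by simp only [List.mem_cons] at hx ⊢; tauto)))

theorem conj_proj : ∀ (l : List Form) (γ δ : Form), δ ∈ γ :: l →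
    ThmDCila ((conj γ l).imp δ) := by
  intro l; induction l with
  | nil => intro γ δ h; simp at h; subst h; exact thm_id _
  | cons δ' m ih =>
    intro γ δ h
    rcases List.mem_cons.mp h with rfl | h
    · exact .A4 _ _
    · exact thm_comp (ih δ' δ h) (.A5 _ _)

theorem derL_to_deriv {Γ : Set Form} {φ : Form} (h : DerL Γ φ) : DerivDCila Γ φ := by
  obtain ⟨L, hL, t⟩ := h.compact
  match L, hL, t with
  | [], _, t => exact Or.inl t
  | γ :: l, hL, t =>
    refine Or.inr ⟨γ, l, hL, ?_⟩
    have h1 : DerL {x | x ∈ γ :: l} φ := DerL.impList_elim (.thm t) (fun δ hδ => hδ)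
    have h2 : DerL {conj γ l} φ :=
      h1.cut (fun x hx => .mp (.thm (conj_proj l γ x hx)) (.ax rfl))
    exact (DerL.ded (h2.mono (by intro x hx; exact Set.mem_insert_iff.mpr (Or.inl hx)))).toThm

theorem deriv_to_derL {Γ : Set Form} {φ : Form} (h : DerivDCila Γ φ) : DerL Γ φ := by
  rcases h with t | ⟨γ, l, hmem, t⟩
  · exact .thm t
  · exact .mp (.thm t) (conj_mem_derL l γ hmem)

end DCilaProof

namespace DCilaProof

/-- Encoding of formulas into ℕ. -/
def encF : Form → ℕ
  | .var n => Nat.pair 0 n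
  | .and a b => Nat.pair 1 (Nat.pair (encF a) (encF b))
  | .or a b => Nat.pair 2 (Nat.pair (encF a) (encF b))
  | .imp a b => Nat.pair 3 (Nat.pair (encF a) (encF b))
  | .neg a => Nat.pair 4 (encF a)
  | .circ a => Nat.pair 5 (encF a)
  | .obl a => Nat.pair 6 (encF a)

theorem encF_inj' : ∀ a b : Form, encF a = encF b → a = b := by
  intro a
  induction a with
  | var n => intro b h; cases b <;> simp [encF, Nat.pair_eq_pair] at h <;> simp [h]
  | and a₁ a₂ ih1 ih2 =>
    intro b h; cases b <;> simp [encF, Nat.pair_eq_pair] at h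
    rw [ih1 _ h.1, ih2 _ h.2]
  | or a₁ a₂ ih1 ih2 =>
    intro b h; cases b <;> simp [encF, Nat.pair_eq_pair] at h
    rw [ih1 _ h.1, ih2 _ h.2]
  | imp a₁ a₂ ih1 ih2 =>
    intro b h; cases b <;> simp [encF, Nat.pair_eq_pair] at h
    rw [ih1 _ h.1, ih2 _ h.2]
  | neg a ih => intro b h; cases b <;> simp [encF, Nat.pair_eq_pair] at h; rw [ih _ h]
  | circ a ih => intro b h; cases b <;> simp [encF, Nat.pair_eq_pair] at h; rw [ih _ h]
  | obl a ih => intro b h; cases b <;> simp [encF, Nat.pair_eq_pair] at h; rw [ih _ h]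

theorem encF_inj : Function.Injective encF := fun a b => encF_inj' a b

instance : Countable Form := ⟨⟨encF, encF_inj⟩⟩
instance : Nonempty Form := ⟨.var 0⟩

noncomputable def enum : ℕ → Form := (exists_surjective_nat Form).choose

theorem enum_surj : Function.Surjective enum := (exists_surjective_nat Form).choose_spec

open Classical in
/-- Stages of the Lindenbaum construction. -/
noncomputable def stage (Γ : Set Form) (ψ : Form) : ℕ → Set Form
  | 0 => Γ
  | n + 1 =>
    if DerL (insert (enum n) (stage Γ ψ n)) ψ then stage Γ ψ n
    else insert (enum n) (stage Γ ψ n)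

/-- The Lindenbaum extension. -/
def lim (Γ : Set Form) (ψ : Form) : Set Form := ⋃ n, stage Γ ψ n

theorem stage_mono_succ (Γ ψ n) : stage Γ ψ n ⊆ stage Γ ψ (n + 1) := by
  simp only [stage]; split
  · exact Set.Subset.rfl
  · exact Set.subset_insert _ _

theorem stage_mono (Γ ψ) {n m : ℕ} (h : n ≤ m) : stage Γ ψ n ⊆ stage Γ ψ m := by
  induction m with
  | zero => simp_all
  | succ m ih =>
    rcases Nat.lt_or_ge n (m + 1) with h' | h'
    · exact (ih (Nat.lt_succ_iff.mp h')).trans (stage_mono_succ Γ ψ m)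
    · have : n = m + 1 := le_antisymm h h'
      subst this; exact Set.Subset.rfl

theorem subset_lim (Γ ψ) : Γ ⊆ lim Γ ψ := fun x hx => Set.mem_iUnion.mpr ⟨0, hx⟩

theorem stage_subset_lim (Γ ψ n) : stage Γ ψ n ⊆ lim Γ ψ :=
  fun x hx => Set.mem_iUnion.mpr ⟨n, hx⟩

theorem stage_not_der {Γ ψ} (h : ¬ DerL Γ ψ) : ∀ n, ¬ DerL (stage Γ ψ n) ψ := by
  intro n; induction n with
  | zero => exact h
  | succ n ih =>
    simp only [stage]; split
    · exact ih
    · assumption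

theorem list_subset_stage {Γ ψ} : ∀ L : List Form, (∀ δ ∈ L, δ ∈ lim Γ ψ) →
    ∃ n, ∀ δ ∈ L, δ ∈ stage Γ ψ n := by
  intro L; induction L with
  | nil => exact fun _ => ⟨0, by simp⟩
  | cons γ M ih =>
    intro h
    obtain ⟨n₁, hn₁⟩ := Set.mem_iUnion.mp (h γ (by simp))
    obtain ⟨n₂, hn₂⟩ := ih (fun δ hδ => h δ (by simp [hδ]))
    refine ⟨max n₁ n₂, ?_⟩
    intro δ hδ
    rcases List.mem_cons.mp hδ with rfl | hδ
    · exact stage_mono Γ ψ (le_max_left _ _) hn₁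
    · exact stage_mono Γ ψ (le_max_right _ _) (hn₂ δ hδ)

theorem lim_not_der {Γ ψ} (h : ¬ DerL Γ ψ) : ¬ DerL (lim Γ ψ) ψ := by
  intro hd
  obtain ⟨L, hL, t⟩ := hd.compact
  obtain ⟨n, hn⟩ := list_subset_stage L hL
  exact stage_not_der h n (DerL.impList_elim (.thm t) hn)

theorem lim_max {Γ ψ} (h : ¬ DerL Γ ψ) {β} (hβ : β ∉ lim Γ ψ) :
    DerL (insert β (lim Γ ψ)) ψ := by
  obtain ⟨n, rfl⟩ := enum_surj β
  have h1 : enum n ∉ stage Γ ψ (n + 1) := fun hx => hβ (stage_subset_lim Γ ψ (n + 1) hx)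
  have h2 : DerL (insert (enum n) (stage Γ ψ n)) ψ := by
    by_contra hc
    exact h1 (by simp only [stage]; rw [if_neg hc]; exact Set.mem_insert _ _)
  exact h2.mono (Set.insert_subset_insert (stage_subset_lim Γ ψ n))

theorem lim_closed {Γ ψ} (h : ¬ DerL Γ ψ) {φ} (hd : DerL (lim Γ ψ) φ) : φ ∈ lim Γ ψ := by
  by_contra hφ
  have h1 : DerL (insert φ (lim Γ ψ)) ψ := lim_max h hφ
  have h2 : DerL (lim Γ ψ) ψ := h1.cut (by
    intro γ hγ
    rcases Set.mem_insert_iff.mp hγ with rfl | hγ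
    · exact hd
    · exact .ax hγ)
  exact lim_not_der h h2

/-- Saturated (maximal relatively nontrivial, deductively closed) set. -/
def Sat (Δ : Set Form) : Prop :=
  (∀ φ, DerL Δ φ → φ ∈ Δ) ∧ ∃ ψ, ψ ∉ Δ ∧ ∀ β, β ∉ Δ → DerL (insert β Δ) ψ

theorem lindenbaum {Γ : Set Form} {ψ : Form} (h : ¬ DerL Γ ψ) :
    ∃ Δ, Γ ⊆ Δ ∧ ψ ∉ Δ ∧ Sat Δ := by
  refine ⟨lim Γ ψ, subset_lim Γ ψ, ?_, fun φ => lim_closed h, ψ, ?_, fun β => lim_max h⟩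
  · exact fun hψ => lim_not_der h (.ax hψ)
  · exact fun hψ => lim_not_der h (.ax hψ)

end DCilaProof

namespace DCilaProof

variable {Δ : Set Form} {α β : Form}

theorem Sat.mem (hS : Sat Δ) {φ} (h : DerL Δ φ) : φ ∈ Δ := hS.1 φ h

/-- Peirce-style combinator: ((α→β)→ψ) → ((α→ψ)→ψ). -/
theorem thm_pt (α β ψ : Form) :
    ThmDCila (((α.imp β).imp ψ).imp ((α.imp ψ).imp ψ)) := by
  apply DerL.toThm
  apply DerL.ded
  apply DerL.ded
  have h1 : DerL (insert (α.imp ψ) (insert ((α.imp β).imp ψ) (∅ : Set Form)))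
      ((α.imp β).imp ψ) := .ax (by simp)
  have h3 : DerL (insert (ψ.imp β) (insert (α.imp ψ) (insert ((α.imp β).imp ψ)
      (∅ : Set Form)))) (α.imp β) := by
    apply DerL.ded
    have hψ : DerL (insert α (insert (ψ.imp β) (insert (α.imp ψ) (insert ((α.imp β).imp ψ)
        (∅ : Set Form))))) ψ :=
      .mp (.ax (show α.imp ψ ∈ _ by simp)) (.ax (show α ∈ _ by simp))
    exact .mp (.ax (show ψ.imp β ∈ _ by simp)) hψ
  have h4 : DerL (insert (α.imp ψ) (insert ((α.imp β).imp ψ) (∅ : Set Form)))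
      ((ψ.imp β).imp ψ) := DerL.ded (.mp (h1.mono (Set.subset_insert _ _)) h3)
  exact .mp (.thm (.A9 ψ β)) h4

/-- Disjunction property of saturated sets. -/
theorem Sat.or_elim (hS : Sat Δ) (h : (α.or β) ∈ Δ) : α ∈ Δ ∨ β ∈ Δ := by
  by_contra hc
  push_neg at hc
  obtain ⟨ψ, hψ, hmax⟩ := hS.2
  have d1 : DerL Δ (α.imp ψ) := (hmax α hc.1).ded
  have d2 : DerL Δ (β.imp ψ) := (hmax β hc.2).ded
  exact hψ (hS.mem (.mp (.mp (.mp (.thm (.A8 α β ψ)) d1) d2) (.ax h)))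

theorem Sat.em (hS : Sat Δ) (α : Form) : α ∈ Δ ∨ α.neg ∈ Δ :=
  hS.or_elim (hS.mem (.thm (.EM α)))

/-- No formula is inconsistent together with its consistency operator. -/
theorem Sat.not_incons (hS : Sat Δ) :
    ¬ (α ∈ Δ ∧ α.neg ∈ Δ ∧ α.circ ∈ Δ) := by
  rintro ⟨h1, h2, h3⟩
  obtain ⟨ψ, hψ, _⟩ := hS.2
  exact hψ (hS.mem (.mp (.mp (.mp (.thm (.bc α ψ)) (.ax h3)) (.ax h1)) (.ax h2)))

theorem Sat.and_iff (hS : Sat Δ) : (α.and β) ∈ Δ ↔ α ∈ Δ ∧ β ∈ Δ := by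
  constructor
  · intro h
    exact ⟨hS.mem (.mp (.thm (.A4 α β)) (.ax h)), hS.mem (.mp (.thm (.A5 α β)) (.ax h))⟩
  · rintro ⟨h1, h2⟩
    exact hS.mem (.mp (.mp (.thm (.A3 α β)) (.ax h1)) (.ax h2))

theorem Sat.or_iff (hS : Sat Δ) : (α.or β) ∈ Δ ↔ α ∈ Δ ∨ β ∈ Δ := by
  constructor
  · exact hS.or_elim
  · rintro (h | h)
    · exact hS.mem (.mp (.thm (.A6 α β)) (.ax h))
    · exact hS.mem (.mp (.thm (.A7 α β)) (.ax h))

theorem Sat.imp_iff (hS : Sat Δ) : (α.imp β) ∈ Δ ↔ (α ∉ Δ ∨ β ∈ Δ) := by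
  constructor
  · intro h
    by_cases hα : α ∈ Δ
    · exact Or.inr (hS.mem (.mp (.ax h) (.ax hα)))
    · exact Or.inl hα
  · rintro (hα | hβ)
    · by_contra him
      obtain ⟨ψ, hψ, hmax⟩ := hS.2
      have d1 : DerL Δ ((α.imp β).imp ψ) := (hmax _ him).ded
      have d2 : DerL Δ (α.imp ψ) := (hmax _ hα).ded
      exact hψ (hS.mem (.mp (.mp (.thm (thm_pt α β ψ)) d1) d2))
    · exact hS.mem (.mp (.thm (.A1 β α)) (.ax hβ))

theorem Sat.circ_iff (hS : Sat Δ) : α.circ ∈ Δ ↔ ¬ (α ∈ Δ ∧ α.neg ∈ Δ) := by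
  constructor
  · intro h hc
    exact hS.not_incons ⟨hc.1, hc.2, h⟩
  · intro h
    rcases hS.em α.circ with hc | hc
    · exact hc
    · have h2 : (α.and α.neg) ∈ Δ := hS.mem (.mp (.thm (.ci α)) (.ax hc))
      exact absurd (hS.and_iff.mp h2) h

theorem Sat.negcirc_iff (hS : Sat Δ) : α.circ.neg ∈ Δ ↔ (α ∈ Δ ∧ α.neg ∈ Δ) := by
  constructor
  · intro h
    exact hS.and_iff.mp (hS.mem (.mp (.thm (.ci α)) (.ax h)))
  · intro h
    rcases hS.em α.circ with hc | hc
    · exact absurd ⟨h.1, h.2, hc⟩ hS.not_incons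
    · exact hc

theorem Sat.negneg (hS : Sat Δ) (h : α.neg.neg ∈ Δ) : α ∈ Δ :=
  hS.mem (.mp (.thm (.cf α)) (.ax h))

theorem Sat.negand_t (hS : Sat Δ) (h1 : α ∈ Δ) (h2 : α.neg ∈ Δ) :
    (α.and α.neg).neg ∉ Δ := by
  intro h
  have hc : α.circ ∈ Δ := hS.mem (.mp (.thm (.cl α)) (.ax h))
  exact hS.not_incons ⟨h1, h2, hc⟩

end DCilaProof

namespace DCilaProof

/-- K-distribution over a list of antecedents. -/
theorem thm_distK : ∀ (L : List Form) (β : Form),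
    ThmDCila ((impList L β).obl.imp (impList (L.map Form.obl) β.obl)) := by
  intro L; induction L with
  | nil => intro β; exact thm_id _
  | cons γ M ih =>
    intro β
    show ThmDCila ((γ.imp (impList M β)).obl.imp
      (γ.obl.imp (impList (M.map Form.obl) β.obl)))
    apply DerL.toThm
    apply DerL.ded
    apply DerL.ded
    have h0 : DerL (insert γ.obl (insert (γ.imp (impList M β)).obl (∅ : Set Form)))
        (impList M β).obl :=
      .mp (.mp (.thm (.OK γ (impList M β))) (.ax (by simp))) (.ax (by simp))
    exact .mp (.thm (ih β)) h0

theorem thm_oblLift {L : List Form} {β : Form} (h : ThmDCila (impList L β)) :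
    ThmDCila (impList (L.map Form.obl) β.obl) :=
  (thm_distK L β).mp h.nec

/-- If `φ` is derivable from the obligations of a saturated set, then `Oφ` belongs to it. -/
theorem derL_obl {Δ : Set Form} (hS : Sat Δ) {φ : Form}
    (h : DerL {β | β.obl ∈ Δ} φ) : φ.obl ∈ Δ := by
  obtain ⟨L, hL, t⟩ := h.compact
  refine hS.mem (DerL.impList_elim (.thm (thm_oblLift t)) ?_)
  intro δ hδ
  obtain ⟨x, hx, rfl⟩ := List.mem_map.mp hδ
  exact hL x hx

/-- Worlds of the canonical model. -/
def CW : Type := {Δ : Set Form // Sat Δ}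

/-- Canonical accessibility. -/
def CR (Δ Δ' : CW) : Prop := ∀ α : Form, α.obl ∈ Δ.1 → α ∈ Δ'.1

open Classical in
/-- Canonical valuation. -/
noncomputable def CV (Δ : CW) (φ : Form) : SV :=
  if φ ∈ Δ.1 then (if φ.neg ∈ Δ.1 then .t else .T) else .F

theorem CV_p1 (Δ : CW) (φ : Form) : (CV Δ φ).p1 = true ↔ φ ∈ Δ.1 := by
  unfold CV; split_ifs with h1 h2
  · exact iff_of_true rfl h1
  · exact iff_of_true rfl h1
  · exact iff_of_false (by simp [SV.p1]) h1

theorem CV_p1_false (Δ : CW) (φ : Form) : (CV Δ φ).p1 = false ↔ φ ∉ Δ.1 := by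
  rw [← CV_p1 Δ φ]; cases (CV Δ φ).p1 <;> simp

theorem CV_p2 (Δ : CW) (φ : Form) : (CV Δ φ).p2 = true ↔ φ.neg ∈ Δ.1 := by
  unfold CV; split_ifs with h1 h2
  · exact iff_of_true rfl h2
  · exact iff_of_false (by simp [SV.p2]) h2
  · exact iff_of_true rfl ((Δ.2.em φ).resolve_left h1)

theorem CV_boo (Δ : CW) (φ : Form) : (CV Δ φ).boo ↔ ¬ (φ ∈ Δ.1 ∧ φ.neg ∈ Δ.1) := by
  unfold CV SV.boo; split_ifs with h1 h2
  · exact iff_of_false (by simp) (fun h => h ⟨h1, h2⟩)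
  · exact iff_of_true (Or.inl rfl) (fun hc => h2 hc.2)
  · exact iff_of_true (Or.inr rfl) (fun hc => h1 hc.1)

theorem not_and_bool (a b : Bool) : ((!(a && b)) = true) ↔ ¬ (a = true ∧ b = true) := by
  cases a <;> cases b <;> simp

theorem bool_ext {a b : Bool} (h : (a = true) ↔ (b = true)) : a = b := by
  cases a <;> cases b <;> simp_all

theorem obl_mem_char (Δ : CW) (α : Form) :
    α.obl ∈ Δ.1 ↔ ∀ Δ' : CW, CR Δ Δ' → α ∈ Δ'.1 := by
  constructor
  · intro h Δ' hR; exact hR α h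
  · intro h; by_contra hno
    have hnd : ¬ DerL {β | β.obl ∈ Δ.1} α := fun hd => hno (derL_obl Δ.2 hd)
    obtain ⟨Δ', hsub, hα, hsat⟩ := lindenbaum hnd
    exact hα (h ⟨Δ', hsat⟩ (fun γ hγ => hsub hγ))

theorem CR_serial (Δ : CW) : ∃ Δ' : CW, CR Δ Δ' := by
  have hnd : ¬ DerL {β | β.obl ∈ Δ.1} (Form.var 0).bot := by
    intro h
    have h1 : (Form.var 0).bot.obl ∈ Δ.1 := derL_obl Δ.2 h
    have h2 : (Form.var 0).bot ∈ Δ.1 := Δ.2.mem (.mp (.thm (.OE (Form.var 0))) (.ax h1))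
    have h3 := (Δ.2.and_iff.mp h2)
    have h4 := (Δ.2.and_iff.mp h3.1)
    exact Δ.2.not_incons ⟨h4.1, h4.2, h3.2⟩
  obtain ⟨Δ', hsub, _, hsat⟩ := lindenbaum hnd
  exact ⟨⟨Δ', hsat⟩, fun α hα => hsub hα⟩

theorem CV_cl (w : CW) (α : Form) (h : CV w α = SV.t) :
    CV w (α.and α.neg) = SV.T := by
  have h1 : α ∈ w.1 ∧ α.neg ∈ w.1 := by
    unfold CV at h; split_ifs at h with h1 h2
    · exact ⟨h1, h2⟩
    all_goals simp at h
  have h2 : (α.and α.neg) ∈ w.1 := w.2.and_iff.mpr h1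
  have h3 : (α.and α.neg).neg ∉ w.1 := w.2.negand_t h1.1 h1.2
  unfold CV; rw [if_pos h2, if_neg h3]

theorem CV_boo_gen (w : CW) {α β χ : Form}
    (hca : ThmDCila ((α.circ.and β.circ).imp χ.circ))
    (hα : (CV w α).boo) (hβ : (CV w β).boo) : (CV w χ).boo := by
  rw [CV_boo] at hα hβ ⊢
  have hcα : α.circ ∈ w.1 := w.2.circ_iff.mpr hα
  have hcβ : β.circ ∈ w.1 := w.2.circ_iff.mpr hβ
  have hχ : χ.circ ∈ w.1 := w.2.mem (.mp (.thm hca) (.ax (w.2.and_iff.mpr ⟨hcα, hcβ⟩)))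
  exact w.2.circ_iff.mp hχ

theorem canonical_model : IsModelDCila CR CV := by
  constructor
  · exact CR_serial
  · intro w α β
    apply bool_ext
    rw [CV_p1, Bool.and_eq_true, CV_p1, CV_p1, (w.2).and_iff]
  · intro w α β
    apply bool_ext
    rw [CV_p1, Bool.or_eq_true, CV_p1, CV_p1, (w.2).or_iff]
  · intro w α β
    apply bool_ext
    rw [CV_p1, Bool.or_eq_true, CV_p1, Bool.not_eq_true', CV_p1_false, (w.2).imp_iff]
  · intro w α
    constructor
    · apply bool_ext
      rw [CV_p1, CV_p2]
    · cases hb : (CV w α.neg).p2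
      · exact Bool.false_le _
      · have : α ∈ w.1 := w.2.negneg ((CV_p2 w α.neg).mp hb)
        rw [(CV_p1 w α).mpr this]
  · intro w α
    constructor
    · apply bool_ext
      rw [CV_p1, (w.2).circ_iff, not_and_bool, CV_p1, CV_p2]
    · apply bool_ext
      rw [CV_p2, (w.2).negcirc_iff, Bool.and_eq_true, CV_p1, CV_p2]
  · intro w α
    rw [CV_p1, obl_mem_char]
    constructor
    · intro h Δ' hR; exact (CV_p1 Δ' α).mpr (h Δ' hR)
    · intro h Δ' hR; exact (CV_p1 Δ' α).mp (h Δ' hR)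
  · exact CV_cl
  · exact fun w α β => CV_boo_gen w (.caAnd α β)
  · exact fun w α β => CV_boo_gen w (.caOr α β)
  · exact fun w α β => CV_boo_gen w (.caImp α β)

end DCilaProof


/-- Completeness of DCila w.r.t. swap Kripke models. -/
theorem DCila_completeness (Γ : Set Form) (φ : Form) :
    SemDCila Γ φ → DerivDCila Γ φ := by
  intro hsem
  by_contra hnd
  have hnl : ¬ DCilaProof.DerL Γ φ := fun h => hnd (DCilaProof.derL_to_deriv h)
  obtain ⟨Δ, hsub, hφ, hsat⟩ := DCilaProof.lindenbaum hnl
  have hval := hsem DCilaProof.CW DCilaProof.CR DCilaProof.CV ⟨⟨Δ, hsat⟩⟩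
    DCilaProof.canonical_model ⟨Δ, hsat⟩
    (fun γ hγ => (DCilaProof.CV_p1 ⟨Δ, hsat⟩ γ).mpr (hsub hγ))
  exact hφ ((DCilaProof.CV_p1 ⟨Δ, hsat⟩ φ).mp hval)
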